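/- Let $(G,H)$ be a discrete Hecke pair. The pair $(M, \rho)$ of representations on $\ell^2(G/H)$ (multiplication and right convolution) is a covariant pair: for all $a, x, b \in G$, $\rho([HaH]) M(\epsilon_{xH}) \rho([HbH]) = \sum_{uH \subseteq Ha^{-1}H,\ vH \subseteq HbH} M(\epsilon_{xuH}) \rho([Hu^{-1}vH]) M(\epsilon_{xvH})$. -/

import Mathlib

open scoped Classical Pointwise

variable {G : Type*} [Group G]

/-- The double coset `HaH`. -/
def dcos (H : Subgroup G) (a : G) : Set G := DoubleCoset.doubleCoset a (H : Set G) (H : Set G)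

/-- The set of left cosets of `H` contained in `HaH`, as a subset of `G ⧸ H`. -/
def leftCosetsIn (H : Subgroup G) (a : G) : Set (G ⧸ H) := QuotientGroup.mk '' dcos H a

/-- The set of right cosets of `H` contained in `HaH`. -/
def rightCosetsIn (H : Subgroup G) (a : G) :
    Set (Quotient (QuotientGroup.rightRel H)) :=
  (fun g => Quotient.mk (QuotientGroup.rightRel H) g) '' dcos H a

/-- The right-coset counting map `R(a) = |H\HaH|`. -/
noncomputable def Rcount (H : Subgroup G) (a : G) : ℕ := Nat.card (rightCosetsIn H a)

/-- `(G,H)` is a (discrete) Hecke pair: every double coset contains finitely many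
left cosets. -/
def IsHeckePair (H : Subgroup G) : Prop := ∀ a : G, (leftCosetsIn H a).Finite

section Aux

lemma mem_dcos {H : Subgroup G} {c g : G} :
    g ∈ dcos H c ↔ ∃ h₁ ∈ H, ∃ h₂ ∈ H, g = h₁ * c * h₂ := by
  simp [dcos, DoubleCoset.mem_doubleCoset]

lemma dcos_mul_right {H : Subgroup G} {c g h : G} (hg : g ∈ dcos H c) (hh : h ∈ H) :
    g * h ∈ dcos H c := by
  obtain ⟨h₁, hh₁, h₂, hh₂, rfl⟩ := mem_dcos.1 hg
  exact mem_dcos.2 ⟨h₁, hh₁, h₂ * h, H.mul_mem hh₂ hh, by group⟩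

lemma dcos_mul_left {H : Subgroup G} {c g h : G} (hh : h ∈ H) (hg : g ∈ dcos H c) :
    h * g ∈ dcos H c := by
  obtain ⟨h₁, hh₁, h₂, hh₂, rfl⟩ := mem_dcos.1 hg
  exact mem_dcos.2 ⟨h * h₁, H.mul_mem hh hh₁, h₂, hh₂, by group⟩

lemma out_mk_spec (H : Subgroup G) (g : G) :
    g⁻¹ * Quotient.out (QuotientGroup.mk g : G ⧸ H) ∈ H := by
  have : (QuotientGroup.mk g : G ⧸ H)
      = QuotientGroup.mk (Quotient.out (QuotientGroup.mk g : G ⧸ H)) :=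
    (QuotientGroup.out_eq' _).symm
  exact QuotientGroup.eq.1 this

lemma out_mk_mem_dcos_iff {H : Subgroup G} {c g : G} :
    Quotient.out (QuotientGroup.mk g : G ⧸ H) ∈ dcos H c ↔ g ∈ dcos H c := by
  have hh := out_mk_spec H g
  have hout : Quotient.out (QuotientGroup.mk g : G ⧸ H)
      = g * (g⁻¹ * Quotient.out (QuotientGroup.mk g : G ⧸ H)) := by group
  constructor
  · intro h
    have hg : g = Quotient.out (QuotientGroup.mk g : G ⧸ H)
        * (g⁻¹ * Quotient.out (QuotientGroup.mk g : G ⧸ H))⁻¹ := by group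
    rw [hg]
    exact dcos_mul_right h (H.inv_mem hh)
  · intro h
    rw [hout]
    exact dcos_mul_right h hh

lemma mem_dcos_inv {H : Subgroup G} {c g : G} :
    g ∈ dcos H c⁻¹ ↔ g⁻¹ ∈ dcos H c := by
  constructor
  · rintro h
    obtain ⟨h₁, hh₁, h₂, hh₂, rfl⟩ := mem_dcos.1 h
    exact mem_dcos.2 ⟨h₂⁻¹, H.inv_mem hh₂, h₁⁻¹, H.inv_mem hh₁, by group⟩
  · rintro h
    obtain ⟨h₁, hh₁, h₂, hh₂, hg⟩ := mem_dcos.1 h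
    refine mem_dcos.2 ⟨h₂⁻¹, H.inv_mem hh₂, h₁⁻¹, H.inv_mem hh₁, ?_⟩
    have : g = (g⁻¹)⁻¹ := by group
    rw [this, hg]; group

lemma finite_out_dcos {H : Subgroup G} (hHecke : IsHeckePair H) (c : G) :
    {u : G ⧸ H | Quotient.out u ∈ dcos H c}.Finite := by
  apply (hHecke c).subset
  intro u hu
  exact ⟨Quotient.out u, hu, Quotient.out_eq u⟩

lemma mem_toFinset_out_dcos {H : Subgroup G} {hf : {u : G ⧸ H | Quotient.out u ∈ dcos H c}.Finite}
    {u : G ⧸ H} : u ∈ hf.toFinset ↔ Quotient.out u ∈ dcos H c := Set.Finite.mem_toFinset _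

/-- Two continuous linear maps on `ℓ²` agreeing on all `lp.single`s are equal. -/
lemma clm_ext_single {ι : Type*} [DecidableEq ι]
    (T S : lp (fun _ : ι => ℂ) 2 →L[ℂ] lp (fun _ : ι => ℂ) 2)
    (h : ∀ d, T (lp.single 2 d 1) = S (lp.single 2 d 1)) : T = S := by
  apply ContinuousLinearMap.ext
  intro f
  have hs : HasSum (fun d : ι => lp.single 2 d (f d)) f :=
    lp.hasSum_single (by norm_num) f
  have key : ∀ d : ι, T (lp.single 2 d (f d)) = S (lp.single 2 d (f d)) := by
    intro d
    have h1 : lp.single 2 d (f d)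
        = (f d) • (lp.single 2 d (1 : ℂ) : lp (fun _ : ι => ℂ) 2) := by
      rw [← lp.single_smul]
      congr 1
      simp
    rw [h1, map_smul, map_smul, h d]
  have hT : HasSum (fun d : ι => T (lp.single 2 d (f d))) (T f) := T.hasSum hs
  have hS : HasSum (fun d : ι => T (lp.single 2 d (f d))) (S f) := by
    have := S.hasSum hs
    simpa [key] using this
  exact hT.unique hS

end Aux

/-- For a discrete Hecke pair `(G,H)`, the pair `(M, ρ)` of multiplication and
right-convolution representations on `ℓ²(G/H)` is a covariant pair:
`ρ([HaH]) M(ε_{xH}) ρ([HbH]) = ∑_{uH ⊆ Ha⁻¹H, vH ⊆ HbH} M(ε_{xuH}) ρ([Hu⁻¹vH]) M(ε_{xvH})`. -/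
theorem stmt12 (H : Subgroup G) (hHecke : IsHeckePair H)
    (Mop : G ⧸ H → lp (fun _ : G ⧸ H => ℂ) 2 →L[ℂ] lp (fun _ : G ⧸ H => ℂ) 2)
    (ρop : G → lp (fun _ : G ⧸ H => ℂ) 2 →L[ℂ] lp (fun _ : G ⧸ H => ℂ) 2)
    (hM : ∀ c d : G ⧸ H,
      Mop c (lp.single 2 d 1) = if d = c then lp.single 2 d 1 else 0)
    (hρ : ∀ (a : G) (d : G ⧸ H),
      ρop a (lp.single 2 d 1) =
        ∑ᶠ u : G ⧸ H,
          if Quotient.out u ∈ dcos H a⁻¹ then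
            lp.single 2 (QuotientGroup.mk (Quotient.out d * Quotient.out u)) 1
          else 0) :
    ∀ a x b : G,
      ρop a * Mop (QuotientGroup.mk x) * ρop b =
        ∑ᶠ p : (G ⧸ H) × (G ⧸ H),
          if Quotient.out p.1 ∈ dcos H a⁻¹ ∧ Quotient.out p.2 ∈ dcos H b then
            Mop (QuotientGroup.mk (x * Quotient.out p.1)) *
              ρop ((Quotient.out p.1)⁻¹ * Quotient.out p.2) *
              Mop (QuotientGroup.mk (x * Quotient.out p.2))
          else 0 := by
  intro a x b
  -- finite index sets
  have finA := finite_out_dcos hHecke (a⁻¹)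
  have finB := finite_out_dcos hHecke b
  set Af := finA.toFinset with hAf
  set Bf := finB.toFinset with hBf
  -- basic quotient facts
  have smul_mk : ∀ (g k : G), (g • (QuotientGroup.mk k : G ⧸ H)) = QuotientGroup.mk (g * k) := by
    intro g k; rfl
  have mk_mul_out : ∀ (g : G) (u : G ⧸ H),
      (QuotientGroup.mk (g * Quotient.out u) : G ⧸ H) = g • u := by
    intro g u
    conv_rhs => rw [← Quotient.out_eq u]
    rw [smul_mk]
  -- ρ applied to a basis vector, as a finite sum
  have ρ_apply : ∀ (c : G) (d : G ⧸ H),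
      ρop c (lp.single 2 d 1) = ∑ u ∈ (finite_out_dcos hHecke c⁻¹).toFinset,
        lp.single 2 ((Quotient.out d) • u) 1 := by
    intro c d
    rw [hρ c d]
    rw [finsum_eq_sum_of_support_subset _ (s := (finite_out_dcos hHecke c⁻¹).toFinset)]
    · apply Finset.sum_congr rfl
      intro u hu
      simp only [Set.Finite.mem_toFinset, Set.mem_setOf_eq] at hu
      rw [if_pos hu, mk_mul_out]
    · intro u hu
      rw [Function.mem_support] at hu
      simp only [Finset.mem_coe, Set.Finite.mem_toFinset, Set.mem_setOf_eq]
      by_contra hc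
      exact hu (if_neg hc)
  -- M applied to a basis vector
  have M_apply : ∀ (c d : G ⧸ H), Mop c (lp.single 2 d 1) = if d = c then lp.single 2 d 1 else 0 := hM
  -- LHS applied to lp.single 2 d 1
  have LHS_apply : ∀ d : G ⧸ H,
      (ρop a * Mop (QuotientGroup.mk x) * ρop b) (lp.single 2 d 1) =
        if x⁻¹ * Quotient.out d ∈ dcos H b then (∑ u ∈ Af, lp.single 2 (x • u) 1) else 0 := by
    intro d
    have h1 : (ρop a * Mop (QuotientGroup.mk x) * ρop b) (lp.single 2 d 1)
        = ρop a (Mop (QuotientGroup.mk x) (ρop b (lp.single 2 d 1))) := rfl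
    rw [h1, ρ_apply b d, map_sum, map_sum]
    have h2 : ∀ v ∈ (finite_out_dcos hHecke b⁻¹).toFinset,
        ρop a (Mop (QuotientGroup.mk x) (lp.single 2 ((Quotient.out d) • v) 1)) =
          if v = (Quotient.out d)⁻¹ • (QuotientGroup.mk x : G ⧸ H) then
            ρop a (lp.single 2 (QuotientGroup.mk x) 1) else 0 := by
      intro v _
      rw [M_apply]
      by_cases hv : (Quotient.out d) • v = (QuotientGroup.mk x : G ⧸ H)
      · rw [if_pos hv, if_pos (by rw [← hv, inv_smul_smul]), hv]
      · rw [if_neg hv, if_neg (by intro hc; exact hv (by rw [hc, smul_inv_smul])), map_zero]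
    rw [Finset.sum_congr rfl h2, Finset.sum_ite_eq']
    have hmem : ((Quotient.out d)⁻¹ • (QuotientGroup.mk x : G ⧸ H)
          ∈ (finite_out_dcos hHecke b⁻¹).toFinset)
        ↔ x⁻¹ * Quotient.out d ∈ dcos H b := by
      rw [Set.Finite.mem_toFinset, Set.mem_setOf_eq, smul_mk, out_mk_mem_dcos_iff,
        mem_dcos_inv, mul_inv_rev, inv_inv]
    by_cases hC : x⁻¹ * Quotient.out d ∈ dcos H b
    · rw [if_pos (hmem.2 hC), if_pos hC, ρ_apply]
      -- reindex the sum over Af by h • ·, where h = x⁻¹ * out (mk x)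
      set hx := x⁻¹ * Quotient.out (QuotientGroup.mk x : G ⧸ H) with hhx
      have hxH : hx ∈ H := out_mk_spec H x
      have houtx : Quotient.out (QuotientGroup.mk x : G ⧸ H) = x * hx := by
        rw [hhx]; group
      have smul_mem : ∀ (h : G), h ∈ H → ∀ u : G ⧸ H,
          u ∈ Af → h • u ∈ Af := by
        intro h hh u hu
        rw [hAf, Set.Finite.mem_toFinset] at hu ⊢
        have : (h • u) = QuotientGroup.mk (h * Quotient.out u) := (mk_mul_out h u).symm
        rw [Set.mem_setOf_eq, this, out_mk_mem_dcos_iff]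
        exact dcos_mul_left hh hu
      rw [show (finite_out_dcos hHecke a⁻¹).toFinset = Af from rfl]
      refine Finset.sum_nbij' (fun u => hx • u) (fun u => hx⁻¹ • u) ?_ ?_ ?_ ?_ ?_
      · intro u hu; exact smul_mem _ hxH u hu
      · intro u hu; exact smul_mem _ (H.inv_mem hxH) u hu
      · intro u _; simp
      · intro u _; simp
      · intro u _
        rw [houtx, mul_smul]
    · rw [if_neg (fun hc => hC (hmem.1 hc)), if_neg hC]
  -- the RHS as a finite sum of operators
  have finP : {p : (G ⧸ H) × (G ⧸ H) |
      Quotient.out p.1 ∈ dcos H a⁻¹ ∧ Quotient.out p.2 ∈ dcos H b}.Finite := by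
    apply (finA.prod finB).subset
    rintro ⟨u, v⟩ ⟨hu, hv⟩
    exact ⟨hu, hv⟩
  have RHS_eq : (∑ᶠ p : (G ⧸ H) × (G ⧸ H),
      if Quotient.out p.1 ∈ dcos H a⁻¹ ∧ Quotient.out p.2 ∈ dcos H b then
        Mop (QuotientGroup.mk (x * Quotient.out p.1)) *
          ρop ((Quotient.out p.1)⁻¹ * Quotient.out p.2) *
          Mop (QuotientGroup.mk (x * Quotient.out p.2))
      else 0) = ∑ p ∈ finP.toFinset,
        Mop (QuotientGroup.mk (x * Quotient.out p.1)) *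
          ρop ((Quotient.out p.1)⁻¹ * Quotient.out p.2) *
          Mop (QuotientGroup.mk (x * Quotient.out p.2)) := by
    rw [finsum_eq_sum_of_support_subset _ (s := finP.toFinset)]
    · apply Finset.sum_congr rfl
      intro p hp
      simp only [Set.Finite.mem_toFinset, Set.mem_setOf_eq] at hp
      rw [if_pos hp]
    · intro p hp
      rw [Function.mem_support] at hp
      simp only [Finset.mem_coe, Set.Finite.mem_toFinset, Set.mem_setOf_eq]
      by_contra hc
      exact hp (if_neg hc)
  rw [RHS_eq]
  apply clm_ext_single
  intro d
  show (ρop a * Mop (QuotientGroup.mk x) * ρop b) (lp.single 2 d 1) =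
    (∑ p ∈ finP.toFinset,
      Mop (QuotientGroup.mk (x * Quotient.out p.1)) *
        ρop ((Quotient.out p.1)⁻¹ * Quotient.out p.2) *
        Mop (QuotientGroup.mk (x * Quotient.out p.2))) (lp.single 2 d 1)
  rw [ContinuousLinearMap.sum_apply]
  -- compute each term of the RHS on lp.single 2 d 1
  have term_eq : ∀ p ∈ finP.toFinset,
      (Mop (QuotientGroup.mk (x * Quotient.out p.1)) *
        ρop ((Quotient.out p.1)⁻¹ * Quotient.out p.2) *
        Mop (QuotientGroup.mk (x * Quotient.out p.2))) (lp.single 2 d 1) =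
      if d = x • p.2 then lp.single 2 (x • p.1) 1 else 0 := by
    rintro ⟨u, v⟩ hp
    rw [Set.Finite.mem_toFinset] at hp
    obtain ⟨hu, hv⟩ := hp
    have h1 : (Mop (QuotientGroup.mk (x * Quotient.out u)) *
        ρop ((Quotient.out u)⁻¹ * Quotient.out v) *
        Mop (QuotientGroup.mk (x * Quotient.out v))) (lp.single 2 d 1)
        = Mop (QuotientGroup.mk (x * Quotient.out u))
            (ρop ((Quotient.out u)⁻¹ * Quotient.out v)
              (Mop (QuotientGroup.mk (x * Quotient.out v)) (lp.single 2 d 1))) := rfl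
    rw [h1, M_apply]
    simp only [mk_mul_out]
    by_cases hd : d = x • v
    · rw [if_pos hd]
      rw [ρ_apply, map_sum]
      have h2 : ∀ w ∈ (finite_out_dcos hHecke
          (((Quotient.out u)⁻¹ * Quotient.out v)⁻¹)).toFinset,
          Mop (x • u) (lp.single 2 ((Quotient.out d) • w) 1) =
            if w = (Quotient.out d)⁻¹ • (x • u) then lp.single 2 (x • u) 1 else 0 := by
        intro w _
        rw [M_apply]
        by_cases hw : (Quotient.out d) • w = x • u
        · rw [if_pos hw, if_pos (by rw [← hw, inv_smul_smul]), hw]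
        · rw [if_neg hw, if_neg (by intro hc; exact hw (by rw [hc, smul_inv_smul]))]
      rw [Finset.sum_congr rfl h2, Finset.sum_ite_eq']
      have hmem : (Quotient.out d)⁻¹ • (x • u)
          ∈ (finite_out_dcos hHecke (((Quotient.out u)⁻¹ * Quotient.out v)⁻¹)).toFinset := by
        rw [Set.Finite.mem_toFinset, Set.mem_setOf_eq]
        have hrw : (Quotient.out d)⁻¹ • (x • u)
            = QuotientGroup.mk ((Quotient.out d)⁻¹ * (x * Quotient.out u)) := by
          rw [← mk_mul_out x u, smul_mk]
        rw [hrw, out_mk_mem_dcos_iff]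
        -- out d = (x * out v) * h with h ∈ H
        have hdH : (x * Quotient.out v)⁻¹ * Quotient.out d ∈ H := by
          have : d = QuotientGroup.mk (x * Quotient.out v) := by
            rw [hd, ← mk_mul_out]
          rw [this]
          exact out_mk_spec H _
        set h := (x * Quotient.out v)⁻¹ * Quotient.out d with hh
        have hod : Quotient.out d = (x * Quotient.out v) * h := by rw [hh]; group
        rw [hod]
        refine mem_dcos.2 ⟨h⁻¹, H.inv_mem hdH, 1, H.one_mem, ?_⟩
        group
      rw [if_pos hmem, if_pos hd]
    · rw [if_neg hd]
      rw [map_zero, map_zero, if_neg hd]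
  rw [Finset.sum_congr rfl term_eq, LHS_apply]
  -- now a pure Finset computation
  have hPf : finP.toFinset = Af ×ˢ Bf := by
    apply Finset.ext
    rintro ⟨u, v⟩
    rw [Set.Finite.mem_toFinset, Finset.mem_product, hAf, hBf,
      Set.Finite.mem_toFinset, Set.Finite.mem_toFinset]
    rfl
  rw [hPf, Finset.sum_product]
  have inner : ∀ u : G ⧸ H,
      (∑ v ∈ Bf, if d = x • v then
          (lp.single 2 (x • u) 1 : lp (fun _ : G ⧸ H => ℂ) 2) else 0) =
        if x⁻¹ * Quotient.out d ∈ dcos H b then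
          (lp.single 2 (x • u) 1 : lp (fun _ : G ⧸ H => ℂ) 2) else 0 := by
    intro u
    have h3 : ∀ v ∈ Bf, (if d = x • v then
          (lp.single 2 (x • u) 1 : lp (fun _ : G ⧸ H => ℂ) 2) else 0)
        = if v = x⁻¹ • d then
          (lp.single 2 (x • u) 1 : lp (fun _ : G ⧸ H => ℂ) 2) else 0 := by
      intro v _
      by_cases hv : d = x • v
      · rw [if_pos hv, if_pos (by rw [hv, inv_smul_smul])]
      · rw [if_neg hv, if_neg (fun hc => hv (by rw [hc, smul_inv_smul]))]
    rw [Finset.sum_congr rfl h3, Finset.sum_ite_eq']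
    congr 1
    rw [hBf, Set.Finite.mem_toFinset, Set.mem_setOf_eq]
    have : (x⁻¹ • d) = QuotientGroup.mk (x⁻¹ * Quotient.out d) := by
      conv_lhs => rw [← Quotient.out_eq d]
      rfl
    rw [this, out_mk_mem_dcos_iff]
  rw [Finset.sum_congr rfl (fun u _ => inner u)]
  by_cases hC : x⁻¹ * Quotient.out d ∈ dcos H b
  · simp only [if_pos hC]
  · simp only [if_neg hC, Finset.sum_const_zero]
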